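/- Let T be a finite positively edge-weighted tree in which every vertex of degree at most 2 belongs to the image of a labeling map φ : X → V(T). If the metric subspace (φ(X), d_T) satisfies the fourth-point condition, then φ is surjective, i.e., every vertex of T is labeled. -/

import Mathlib

/-- The total weight of a walk in a graph, with respect to an edge-weight
function `w` on pairs of vertices. -/
def SimpleGraph.Walk.weight {V : Type*} {G : SimpleGraph V} (w : V → V → ℝ)
    {u v : V} (p : G.Walk u v) : ℝ :=
  (p.darts.map fun d => w d.toProd.1 d.toProd.2).sum

namespace FourthPointAux

open SimpleGraph Walk

lemma list_sum_le_of_sublist {l₁ l₂ : List ℝ} (h : l₁.Sublist l₂)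
    (hp : ∀ x ∈ l₂, 0 ≤ x) : l₁.sum ≤ l₂.sum := by
  induction h with
  | slnil => exact le_refl _
  | @cons l₁ l₂ a h ih =>
    have h0 : 0 ≤ a := hp a List.mem_cons_self
    have := ih (fun x hx => hp x (List.mem_cons_of_mem _ hx))
    simp only [List.sum_cons]
    linarith
  | @cons_cons l₁ l₂ a h ih =>
    have := ih (fun x hx => hp x (List.mem_cons_of_mem _ hx))
    simp only [List.sum_cons]
    linarith

lemma list_eq_of_sublist_of_sum {l₁ l₂ : List ℝ} (h : l₁.Sublist l₂)
    (hp : ∀ x ∈ l₂, 0 < x) (hs : l₂.sum ≤ l₁.sum) : l₁ = l₂ := by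
  induction h with
  | slnil => rfl
  | @cons l₁ l₂ a h ih =>
    exfalso
    have h0 : 0 < a := hp a List.mem_cons_self
    have hle := list_sum_le_of_sublist h (fun x hx => le_of_lt (hp x (List.mem_cons_of_mem _ hx)))
    simp only [List.sum_cons] at hs
    linarith
  | @cons_cons l₁ l₂ a h ih =>
    simp only [List.sum_cons] at hs
    rw [ih (fun x hx => hp x (List.mem_cons_of_mem _ hx)) (by linarith)]

variable {V : Type*} {G : SimpleGraph V}

@[simp] lemma weight_nil (w : V → V → ℝ) {u : V} :
    (Walk.nil : G.Walk u u).weight w = 0 := rfl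

@[simp] lemma weight_cons (w : V → V → ℝ) {u v x : V} (h : G.Adj u v) (p : G.Walk v x) :
    (Walk.cons h p).weight w = w u v + p.weight w := by
  simp [SimpleGraph.Walk.weight]

lemma weight_append (w : V → V → ℝ) {u v x : V} (p : G.Walk u v) (q : G.Walk v x) :
    (p.append q).weight w = p.weight w + q.weight w := by
  simp [SimpleGraph.Walk.weight, darts_append]

lemma weight_reverse (w : V → V → ℝ) (hsymm : ∀ u v, w u v = w v u)
    {u v : V} (p : G.Walk u v) : p.reverse.weight w = p.weight w := by
  induction p with
  | nil => simp
  | cons h p ih =>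
    rw [reverse_cons, weight_append, ih, weight_cons, weight_cons, weight_nil,
      hsymm]
    ring

lemma nil_eq {a b : V} (p : G.Walk a b) (hp : p.Nil) : a = b := by
  cases p with
  | nil => rfl
  | cons h q => simp at hp

lemma getVert_one_append {a b c : V} (p : G.Walk a b) (q : G.Walk b c)
    (hp : ¬ p.Nil) : (p.append q).getVert 1 = p.getVert 1 := by
  cases p with
  | nil => simp at hp
  | cons h p' =>
    rw [cons_append, getVert_cons_succ, getVert_cons_succ, getVert_zero, getVert_zero]

lemma getVert_one_takeUntil [DecidableEq V] {a b s : V} (p : G.Walk a b)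
    (hs : s ∈ p.support) (hsa : s ≠ a) :
    (p.takeUntil s hs).getVert 1 = p.getVert 1 := by
  have hnn : ¬ (p.takeUntil s hs).Nil := fun hn => hsa (nil_eq _ hn).symm
  conv_rhs => rw [← take_spec p hs]
  rw [getVert_one_append _ _ hnn]

end FourthPointAux

open FourthPointAux SimpleGraph Walk in
theorem labeling_surjective_of_fourth_point {X : Type*} {V : Type*} [Fintype V]
    {G : SimpleGraph V} [DecidableRel G.Adj] (hT : G.IsTree) (w : V → V → ℝ)
    (hpos : ∀ u v : V, G.Adj u v → 0 < w u v) (hsymm : ∀ u v : V, w u v = w v u)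
    (dT : V → V → ℝ)
    (hdT : ∀ u v : V, ∀ p : G.Walk u v, p.IsPath → dT u v = p.weight w)
    (φ : X → V) (hdeg : ∀ v : V, G.degree v ≤ 2 → v ∈ Set.range φ)
    (h4th : ∀ x y z : X, ∃ p : X,
      dT (φ x) (φ p) + dT (φ y) (φ p) + dT (φ z) (φ p)
        = (dT (φ x) (φ y) + dT (φ y) (φ z) + dT (φ z) (φ x)) / 2) :
    Function.Surjective φ := by
  classical
  intro v
  by_cases hv : G.degree v ≤ 2
  · exact hdeg v hv
  have hEU := hT.existsUnique_path
  set geod : ∀ a b : V, G.Walk a b := fun a b => (hEU a b).choose with hgeod_def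
  have hgP : ∀ a b, (geod a b).IsPath := fun a b => (hEU a b).choose_spec.1
  have hgU : ∀ a b (p : G.Walk a b), p.IsPath → p = geod a b := fun a b p hp =>
    ((hEU a b).unique hp (hEU a b).choose_spec.1)
  have hdg : ∀ a b, dT a b = (geod a b).weight w := fun a b => hdT a b _ (hgP a b)
  have hsd : ∀ a b, dT a b = dT b a := by
    intro a b
    rw [hdg a b, hdT b a (geod a b).reverse (hgP a b).reverse,
      weight_reverse w hsymm]
  -- the triangle inequality, with the equality case
  have htri : ∀ a q b : V, dT a b ≤ dT a q + dT q b ∧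
      (dT a q + dT q b ≤ dT a b → q ∈ (geod a b).support) := by
    intro a q b
    set f : G.Dart → ℝ := fun d => w d.toProd.1 d.toProd.2 with hf
    set W : G.Walk a b := (geod a q).append (geod q b) with hW
    have hWw : W.weight w = dT a q + dT q b := by
      rw [hW, weight_append, hdg a q, hdg q b]
    have hB : W.bypass = geod a b := hgU a b _ (bypass_isPath W)
    have hnd : W.bypass.darts.Nodup :=
      darts_nodup_of_support_nodup (bypass_isPath W).support_nodup
    obtain ⟨l, hlp, hls⟩ := hnd.subperm (darts_bypass_subset W)
    have hmap : (l.map f).Sublist (W.darts.map f) := hls.map f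
    have hsum : (l.map f).sum = W.bypass.weight w := (hlp.map f).sum_eq
    have hposW : ∀ x ∈ W.darts.map f, 0 < x := by
      rintro x hx
      obtain ⟨d, hd, rfl⟩ := List.mem_map.1 hx
      exact hpos _ _ d.adj
    have hle : dT a b ≤ dT a q + dT q b := by
      rw [hdg a b, ← hB, ← hsum, ← hWw]
      exact list_sum_le_of_sublist hmap (fun x hx => le_of_lt (hposW x hx))
    refine ⟨hle, fun heq => ?_⟩
    have hsum2 : (W.darts.map f).sum ≤ (l.map f).sum := by
      rw [hsum]
      have : W.weight w ≤ dT a b := hWw ▸ heq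
      rw [hdg a b, ← hB] at this
      exact le_trans (le_of_eq hWw) (by rw [hdg a b, ← hB] at heq; exact heq)
    have hmeq : l.map f = W.darts.map f := list_eq_of_sublist_of_sum hmap hposW hsum2
    have hlen : l.length = W.darts.length := by
      have := congrArg List.length hmeq
      simpa using this
    have hlW : l = W.darts := hls.eq_of_length hlen
    have hperm : W.bypass.darts.Perm W.darts := hlp.symm.trans (hlW ▸ List.Perm.refl l)
    -- q is in the support of W, hence of W.bypass
    have hqW : q ∈ W.support := by
      rw [hW, mem_support_append_iff]
      exact Or.inl (end_mem_support _)
    rw [← hB]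
    rw [← cons_map_snd_darts] at hqW
    rcases List.mem_cons.1 hqW with h1 | h1
    · rw [h1]; exact start_mem_support _
    · have : q ∈ W.bypass.darts.map (·.snd) := ((hperm.map (·.snd)).mem_iff).2 h1
      rw [map_snd_darts] at this
      rw [support_eq_cons]
      exact List.mem_cons_of_mem _ this
  -- branches at v
  set Br : V → V → Prop := fun a u => u ≠ v ∧ (geod v u).getVert 1 = a with hBr
  have hnotnil : ∀ {a b : V}, a ≠ b → ∀ (p : G.Walk a b), ¬ p.Nil :=
    fun hab p hp => hab (nil_eq p hp)
  have hBrnbr : ∀ {a : V}, G.Adj v a → Br a a := by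
    intro a ha
    have hpath : (Walk.cons ha Walk.nil).IsPath := by simp [ha.ne]
    have := hgU v a _ hpath
    refine ⟨ha.ne', ?_⟩
    rw [← this, getVert_cons_succ, getVert_zero]
  -- distinct branches only meet at v
  have hdisj : ∀ {a b u u' : V}, a ≠ b → Br a u → Br b u' → ∀ s,
      s ∈ (geod v u).support → s ∈ (geod v u').support → s = v := by
    rintro a b u u' hab ⟨hu, hua⟩ ⟨hu', hub⟩ s hs hs'
    by_contra hsv
    have h1 : (geod v u).takeUntil s hs = geod v s := hgU v s _ ((hgP v u).takeUntil hs)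
    have h2 : (geod v u').takeUntil s hs' = geod v s := hgU v s _ ((hgP v u').takeUntil hs')
    have e1 : (geod v s).getVert 1 = a := by
      rw [← h1, getVert_one_takeUntil _ hs hsv]; exact hua
    have e2 : (geod v s).getVert 1 = b := by
      rw [← h2, getVert_one_takeUntil _ hs' hsv]; exact hub
    exact hab (e1 ▸ e2)
  -- geodesics between different branches pass through v
  have hthru : ∀ {a b u u' : V}, a ≠ b → Br a u → Br b u' →
      geod u u' = (geod v u).reverse.append (geod v u') ∧
        dT u u' = dT u v + dT v u' := by
    intro a b u u' hab hu hu'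
    set W : G.Walk u u' := (geod v u).reverse.append (geod v u') with hW
    have hWpath : W.IsPath := by
      rw [isPath_def, hW, support_append]
      refine List.Nodup.append ?_ ?_ ?_
      · rw [support_reverse]
        exact List.nodup_reverse.2 (hgP v u).support_nodup
      · exact List.Nodup.of_cons (support_eq_cons (geod v u') ▸ (hgP v u').support_nodup)
      · intro s hs1 hs2
        have hs1' : s ∈ (geod v u).support := by
          rw [support_reverse] at hs1; exact List.mem_reverse.1 hs1
        have hs2' : s ∈ (geod v u').support := by
          rw [support_eq_cons]
          exact List.mem_cons_of_mem _ hs2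
        have hsv : s = v := hdisj hab hu hu' s hs1' hs2'
        have hvnot : v ∉ (geod v u').support.tail := by
          have := (hgP v u').support_nodup
          rw [support_eq_cons] at this
          exact (List.nodup_cons.1 this).1
        exact hvnot (hsv ▸ hs2)
    refine ⟨(hgU u u' W hWpath).symm, ?_⟩
    rw [hdT u u' W hWpath, hW, weight_append, weight_reverse w hsymm,
      ← hdg v u', ← hdg v u, hsd u v]
  -- every branch contains a labeled vertex
  have hbr_label : ∀ a : V, G.Adj v a → ∃ x : X, Br a (φ x) := by
    intro a ha
    set S : Finset V := Finset.univ.filter (fun u => Br a u) with hS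
    have hSne : S.Nonempty := ⟨a, Finset.mem_filter.2 ⟨Finset.mem_univ _, hBrnbr ha⟩⟩
    obtain ⟨u, huS, hmax⟩ := S.exists_max_image (fun u => dT v u) hSne
    have hBu : Br a u := (Finset.mem_filter.1 huS).2
    have huv : u ≠ v := hBu.1
    have hsub : G.neighborFinset u ⊆ {(geod u v).getVert 1} := by
      intro t ht
      rw [Finset.mem_singleton]
      by_contra htp
      have hat : G.Adj u t := (mem_neighborFinset _ _ _).1 ht
      have htsupp : t ∉ (geod u v).support := by
        intro hts
        have h1 : (geod u v).takeUntil t hts = geod u t :=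
          hgU u t _ ((hgP u v).takeUntil hts)
        have h2 : (Walk.cons hat Walk.nil) = geod u t := hgU u t _ (by simp [hat.ne])
        have e1 : (geod u t).getVert 1 = (geod u v).getVert 1 := by
          rw [← h1]; exact getVert_one_takeUntil _ hts hat.ne'
        have e2 : (geod u t).getVert 1 = t := by
          rw [← h2, getVert_cons_succ, getVert_zero]
        exact htp (e2.symm.trans e1)
      have hWp : (Walk.cons hat.symm (geod u v)).IsPath :=
        (hgP u v).cons htsupp
      have htv : t ≠ v := by
        intro h
        exact htsupp (h ▸ end_mem_support _)
      have hgvt : (Walk.cons hat.symm (geod u v)).reverse = geod v t :=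
        hgU v t _ hWp.reverse
      have hBt : Br a t := by
        refine ⟨htv, ?_⟩
        rw [← hgvt, reverse_cons,
          getVert_one_append _ _ (hnotnil (Ne.symm huv) (geod u v).reverse)]
        have : (geod u v).reverse = geod v u := hgU v u _ (hgP u v).reverse
        rw [this]
        exact hBu.2
      have hd1 : dT v t = w t u + dT u v := by
        rw [hdT v t _ hWp.reverse, weight_reverse w hsymm, weight_cons, ← hdg u v]
      have hle : dT v t ≤ dT v u :=
        hmax t (Finset.mem_filter.2 ⟨Finset.mem_univ _, hBt⟩)
      have hwp : 0 < w t u := hpos t u hat.symm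
      have hsduv : dT v u = dT u v := hsd v u
      linarith
    have hdeg_u : G.degree u ≤ 2 := by
      rw [← card_neighborFinset_eq_degree]
      calc (G.neighborFinset u).card ≤ ({(geod u v).getVert 1} : Finset V).card :=
            Finset.card_le_card hsub
        _ ≤ 2 := by simp
    obtain ⟨x, hx⟩ := hdeg u hdeg_u
    exact ⟨x, hx ▸ hBu⟩
  -- v has three distinct neighbors
  have hcard : 2 < (G.neighborFinset v).card := by
    rw [card_neighborFinset_eq_degree]; omega
  obtain ⟨a, b, c, haS, hbS, hcS, hab, hac, hbc⟩ := Finset.two_lt_card_iff.1 hcard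
  have ha : G.Adj v a := (mem_neighborFinset _ _ _).1 haS
  have hb : G.Adj v b := (mem_neighborFinset _ _ _).1 hbS
  have hc : G.Adj v c := (mem_neighborFinset _ _ _).1 hcS
  obtain ⟨x, hBx⟩ := hbr_label a ha
  obtain ⟨y, hBy⟩ := hbr_label b hb
  obtain ⟨z, hBz⟩ := hbr_label c hc
  obtain ⟨p, hp⟩ := h4th x y z
  set q : V := φ p with hq
  -- perimeter computation
  have hxy := hthru hab hBx hBy
  have hyz := hthru hbc hBy hBz
  have hzx := hthru (Ne.symm hac) hBz hBx
  have htx : dT (φ x) v = dT v (φ x) := hsd _ _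
  have hty : dT (φ y) v = dT v (φ y) := hsd _ _
  have htz : dT (φ z) v = dT v (φ z) := hsd _ _
  -- each triangle inequality is tight at q
  have t1 := htri (φ x) q (φ y)
  have t2 := htri (φ y) q (φ z)
  have t3 := htri (φ z) q (φ x)
  have sqx : dT q (φ x) = dT (φ x) q := hsd _ _
  have sqy : dT q (φ y) = dT (φ y) q := hsd _ _
  have sqz : dT q (φ z) = dT (φ z) q := hsd _ _
  have e1 : dT (φ x) q + dT q (φ y) ≤ dT (φ x) (φ y) := by
    have h1 := t1.1; have h2 := t2.1; have h3 := t3.1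
    rw [hxy.2, hyz.2, hzx.2] at hp
    linarith [hp, hxy.2, hyz.2, hzx.2]
  have e2 : dT (φ y) q + dT q (φ z) ≤ dT (φ y) (φ z) := by
    have h1 := t1.1; have h2 := t2.1; have h3 := t3.1
    rw [hxy.2, hyz.2, hzx.2] at hp
    linarith [hp, hxy.2, hyz.2, hzx.2]
  have e3 : dT (φ z) q + dT q (φ x) ≤ dT (φ z) (φ x) := by
    have h1 := t1.1; have h2 := t2.1; have h3 := t3.1
    rw [hxy.2, hyz.2, hzx.2] at hp
    linarith [hp, hxy.2, hyz.2, hzx.2]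
  have m1 : q ∈ (geod (φ x) (φ y)).support := t1.2 e1
  have m2 : q ∈ (geod (φ y) (φ z)).support := t2.2 e2
  have m3 : q ∈ (geod (φ z) (φ x)).support := t3.2 e3
  -- split memberships along the two halves
  have split : ∀ {u u' : V} (hg : geod u u' = (geod v u).reverse.append (geod v u')),
      q ∈ (geod u u').support → q ∈ (geod v u).support ∨ q ∈ (geod v u').support := by
    intro u u' hg hm
    rw [hg, mem_support_append_iff] at hm
    rcases hm with h | h
    · left; rw [support_reverse] at h; exact List.mem_reverse.1 h
    · right; exact h
  have mx := split hxy.1 m1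
  have my := split hyz.1 m2
  have mz := split hzx.1 m3
  refine ⟨p, ?_⟩
  show q = v
  rcases mx with hx1 | hy1
  · rcases my with hy2 | hz2
    · exact hdisj hab hBx hBy q hx1 hy2
    · exact hdisj hac hBx hBz q hx1 hz2
  · rcases mz with hz3 | hx3
    · exact hdisj hbc hBy hBz q hy1 hz3
    · exact hdisj hab hBx hBy q hx3 hy1
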